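/- There exists d₀ > 0 such that for every real d ≥ d₀, the probability that every independent set I of G^{bip}_{n,d} satisfies (|I∩L| + |I∩R|) · n·(log d)/d ≥ |I∩L| · |I∩R| tends to 1 as n → ∞. (Equivalently, writing |I∩L| = α_L·(log d/d)·n and |I∩R| = α_R·(log d/d)·n, with high probability α_L + α_R ≥ α_L·α_R for every independent set I.) -/

import Mathlib

open MeasureTheory Real Filter

noncomputable section

/-- Bernoulli measure on `Bool` with success probability `p`. -/
def coin (p : ℝ) : Measure Bool :=
  ENNReal.ofReal p • Measure.dirac true + ENNReal.ofReal (1 - p) • Measure.dirac false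

/-- The random bipartite graph `G^bip_{n,d}`, as a product (Bernoulli(d/n)) measure on
edge-indicator vectors indexed by the `n * n` possible edges. -/
def edgeMeasure (n : ℕ) (d : ℝ) : Measure (Fin (n * n) → Bool) :=
  Measure.pi fun _ => coin (d / n)

/-- Vertex set: the left class `L` is `Sum.inl`, the right class `R` is `Sum.inr`. -/
abbrev Vtx (n : ℕ) := Fin n ⊕ Fin n

/-- Adjacency in the bipartite graph with edge-indicator vector `A`:
`i ∈ L` and `j ∈ R` are adjacent iff the indicator of the edge `(i,j)` is `true`. -/
def adjB (n : ℕ) (A : Fin (n * n) → Bool) : Vtx n → Vtx n → Prop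
  | Sum.inl i, Sum.inr j => A (finProdFinEquiv (i, j)) = true
  | Sum.inr j, Sum.inl i => A (finProdFinEquiv (i, j)) = true
  | _, _ => False

/-- `S` is an independent set of the bipartite graph encoded by `A`. -/
def IsIndepSet (n : ℕ) (A : Fin (n * n) → Bool) (S : Set (Vtx n)) : Prop :=
  ∀ u ∈ S, ∀ v ∈ S, ¬ adjB n A u v

/-- `S ∩ L`. -/
def leftPart {n : ℕ} (S : Set (Vtx n)) : Set (Vtx n) := S ∩ Set.range Sum.inl

/-- `S ∩ R`. -/
def rightPart {n : ℕ} (S : Set (Vtx n)) : Set (Vtx n) := S ∩ Set.range Sum.inr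

/-- `S` is `γ`-balanced: `| |S ∩ L| - γ|S| | < 1`. -/
def IsBalanced (γ : ℝ) {n : ℕ} (S : Set (Vtx n)) : Prop :=
  |((leftPart S).ncard : ℝ) - γ * (S.ncard : ℝ)| < 1

instance coin_finite (p : ℝ) : IsFiniteMeasure (coin p) := by
  constructor
  simp [coin]

lemma coin_false (p : ℝ) : coin p {false} = ENNReal.ofReal (1 - p) := by
  simp [coin, Measure.dirac_apply]

lemma coin_univ (p : ℝ) (h0 : 0 ≤ p) (h1 : p ≤ 1) : coin p Set.univ = 1 := by
  simp [coin]
  rw [← ENNReal.ofReal_add h0 (by linarith)]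
  norm_num

lemma meas_all {m : ℕ} (s : Set (Fin m → Bool)) : MeasurableSet s :=
  (Set.to_countable s).measurableSet

lemma coin_prob (p : ℝ) (h0 : 0 ≤ p) (h1 : p ≤ 1) : IsProbabilityMeasure (coin p) :=
  ⟨coin_univ p h0 h1⟩

lemma edge_cyl (n : ℕ) (d : ℝ) (h0 : 0 ≤ d / n) (h1 : d / n ≤ 1)
    (E : Finset (Fin (n * n))) :
    edgeMeasure n d {A | ∀ i ∈ E, A i = false} = ENNReal.ofReal (1 - d / n) ^ E.card := by
  classical
  have hset : {A : Fin (n*n) → Bool | ∀ i ∈ E, A i = false}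
      = Set.pi Set.univ (fun i => if i ∈ E then ({false} : Set Bool) else Set.univ) := by
    ext A
    simp only [Set.mem_setOf_eq, Set.mem_pi, Set.mem_univ, forall_true_left]
    constructor
    · intro h i
      by_cases hi : i ∈ E <;> simp [hi, h]
    · intro h i hi
      have := h i
      simpa [hi] using this
  rw [edgeMeasure, hset, Measure.pi_pi]
  have : ∀ i : Fin (n*n), coin (d/n) (if i ∈ E then ({false} : Set Bool) else Set.univ)
      = if i ∈ E then ENNReal.ofReal (1 - d/n) else 1 := by
    intro i
    by_cases hi : i ∈ E
    · simp [hi, coin_false]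
    · rw [if_neg hi, if_neg hi]; exact coin_univ _ h0 h1
  simp_rw [this]
  rw [Finset.prod_ite_mem, Finset.univ_inter, Finset.prod_const]

lemma pow_self_le_exp_mul_factorial : ∀ j : ℕ, (j : ℝ) ^ j ≤ Real.exp 1 ^ j * (j.factorial : ℝ)
  | 0 => by norm_num
  | (j+1) => by
    have ih := pow_self_le_exp_mul_factorial j
    rcases Nat.eq_zero_or_pos j with hj | hj
    · subst hj; simpa using Real.one_le_exp (by norm_num)
    have hjp : (0:ℝ) < j := by exact_mod_cast hj
    have key : ((j:ℝ)+1)^j ≤ Real.exp 1 * (j:ℝ)^j := by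
      have h1 : (j:ℝ)+1 = (j:ℝ) * (1 + 1/j) := by field_simp
      have h2 : (1 + 1/(j:ℝ))^j ≤ Real.exp 1 := by
        have := Real.add_one_le_exp (1/(j:ℝ))
        calc (1 + 1/(j:ℝ))^j ≤ (Real.exp (1/j))^j := by
              apply pow_le_pow_left₀ (by positivity) (by linarith)
          _ = Real.exp 1 := by
              rw [← Real.exp_nat_mul]
              congr 1; field_simp
      calc ((j:ℝ)+1)^j = (j:ℝ)^j * (1+1/j)^j := by rw [h1, mul_pow]
        _ ≤ (j:ℝ)^j * Real.exp 1 := by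
            apply mul_le_mul_of_nonneg_left h2 (by positivity)
        _ = Real.exp 1 * (j:ℝ)^j := by ring
    rw [show (((j+1:ℕ)):ℝ) = (j:ℝ)+1 by push_cast; ring]
    calc ((j:ℝ)+1)^(j+1) = ((j:ℝ)+1) * ((j:ℝ)+1)^j := by ring
      _ ≤ ((j:ℝ)+1) * (Real.exp 1 * (j:ℝ)^j) := by
          apply mul_le_mul_of_nonneg_left key (by positivity)
      _ ≤ ((j:ℝ)+1) * (Real.exp 1 * (Real.exp 1 ^ j * j.factorial)) := by
          apply mul_le_mul_of_nonneg_left (mul_le_mul_of_nonneg_left ih (Real.exp_pos 1).le) (by positivity)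
      _ = Real.exp 1 ^ (j+1) * ((j+1).factorial : ℝ) := by
          rw [Nat.factorial_succ]; push_cast; ring

lemma choose_le_e_pow (n j : ℕ) (hj : 1 ≤ j) :
    (n.choose j : ℝ) ≤ (Real.exp 1 * n / j) ^ j := by
  have h1 : (n.choose j : ℝ) ≤ (n:ℝ)^j / j.factorial := Nat.choose_le_pow_div j n
  have hjp : (0:ℝ) < j := by exact_mod_cast hj
  have hfp : (0:ℝ) < j.factorial := by exact_mod_cast j.factorial_pos
  refine h1.trans ?_
  rw [div_pow, div_le_div_iff₀ hfp (by positivity)]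
  have := pow_self_le_exp_mul_factorial j
  calc (n:ℝ)^j * (j:ℝ)^j ≤ (n:ℝ)^j * (Real.exp 1 ^ j * j.factorial) := by
        apply mul_le_mul_of_nonneg_left this (by positivity)
    _ = (Real.exp 1 * n)^j * j.factorial := by rw [mul_pow]; ring

lemma sum_filter_le (n : ℕ) (d : ℝ) (hd : 11 ≤ Real.log d) (hd0 : 0 < d) :
    ∑ K ∈ Finset.univ.filter
        (fun K : Finset (Fin n) => (n : ℝ) * (Real.log d / d) < (K.card : ℝ)),
      Real.exp (-(K.card : ℝ) * Real.log d)
    ≤ 2 * (1/2 : ℝ) ^ ((n : ℝ) * (Real.log d / d)) := by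
  classical
  set T : ℝ := (n : ℝ) * (Real.log d / d) with hT
  have hld : (0:ℝ) < Real.log d := by linarith
  -- rewrite as sum over all K of an if
  rw [Finset.sum_filter]
  -- group by cardinality
  have h2 : ∑ K : Finset (Fin n), (if T < (K.card : ℝ) then Real.exp (-(K.card : ℝ) * Real.log d) else 0)
      = ∑ j ∈ Finset.range (n + 1), (n.choose j : ℝ) *
          (if T < (j : ℝ) then Real.exp (-(j : ℝ) * Real.log d) else 0) := by
    rw [← Finset.powerset_univ, Finset.sum_powerset]
    rw [Finset.card_univ, Fintype.card_fin]
    refine Finset.sum_congr rfl fun j _ => ?_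
    rw [Finset.sum_congr rfl (fun K hK => by
          rw [(Finset.mem_powersetCard.mp hK).2] :
        ∀ K ∈ Finset.powersetCard j (Finset.univ : Finset (Fin n)), _ = _),
      Finset.sum_const, Finset.card_powersetCard, Finset.card_univ, Fintype.card_fin,
      nsmul_eq_mul]
  rw [h2]
  -- bound each term
  have h3 : ∀ j ∈ Finset.range (n + 1),
      (n.choose j : ℝ) * (if T < (j : ℝ) then Real.exp (-(j : ℝ) * Real.log d) else 0)
      ≤ (1/2 : ℝ) ^ T * (1/2 : ℝ) ^ j := by
    intro j _
    by_cases hj : T < (j : ℝ)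
    · rw [if_pos hj]
      have hj1 : 1 ≤ j := by
        by_contra h
        push_neg at h
        interval_cases j
        simp only [Nat.cast_zero] at hj
        have hT0 : (0:ℝ) ≤ T := mul_nonneg (Nat.cast_nonneg n) (div_nonneg hld.le hd0.le)
        linarith
      have hjp : (0:ℝ) < j := by exact_mod_cast hj1
      have hexp : Real.exp (-(j:ℝ) * Real.log d) = (1/d) ^ j := by
        rw [show -(j:ℝ) * Real.log d = (j:ℕ) * (-Real.log d) by push_cast; ring,
          Real.exp_nat_mul, Real.exp_neg, Real.exp_log hd0, one_div]
      have hcb : (n.choose j : ℝ) * Real.exp (-(j:ℝ) * Real.log d)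
          ≤ (Real.exp 1 * n / (j * d)) ^ j := by
        rw [hexp]
        calc (n.choose j : ℝ) * (1/d)^j ≤ (Real.exp 1 * n / j)^j * (1/d)^j := by
              apply mul_le_mul_of_nonneg_right (choose_le_e_pow n j hj1) (by positivity)
          _ = (Real.exp 1 * n / (j * d)) ^ j := by
              rw [← mul_pow]; congr 1; field_simp
      have hbase : Real.exp 1 * n / ((j:ℝ) * d) ≤ 1/4 := by
        have hnd : (n : ℝ) / ((j:ℝ) * d) ≤ 1 / Real.log d := by
          rw [div_le_div_iff₀ (by positivity) hld]
          have : (n:ℝ) * Real.log d = T * d := by rw [hT]; field_simp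
          rw [this]
          nlinarith [hj.le, hd0.le]
        have he : Real.exp 1 ≤ 11/4 := by
          have := Real.exp_one_lt_d9
          linarith
        calc Real.exp 1 * n / ((j:ℝ) * d) = Real.exp 1 * ((n:ℝ) / ((j:ℝ)*d)) := by ring
          _ ≤ (11/4) * (1 / Real.log d) := by
              apply mul_le_mul he hnd (by positivity) (by norm_num)
          _ ≤ 1/4 := by
              rw [show (11:ℝ)/4 * (1/Real.log d) = 11/(4*Real.log d) by ring,
                div_le_div_iff₀ (by positivity) (by norm_num : (0:ℝ) < 4)]
              linarith
      have h14 : (Real.exp 1 * n / ((j:ℝ) * d)) ^ j ≤ (1/4 : ℝ)^j := by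
        apply pow_le_pow_left₀ (by positivity) hbase
      have h144 : (1/4 : ℝ)^j = (1/2:ℝ)^j * (1/2:ℝ)^j := by
        rw [← mul_pow]; norm_num
      have hhalf : ((1/2:ℝ))^j ≤ (1/2:ℝ) ^ T := by
        rw [← Real.rpow_natCast (1/2 : ℝ) j]
        exact Real.rpow_le_rpow_of_exponent_ge (by norm_num) (by norm_num) hj.le
      calc (n.choose j : ℝ) * Real.exp (-(j:ℝ) * Real.log d)
          ≤ (1/4:ℝ)^j := hcb.trans h14
        _ = (1/2:ℝ)^j * (1/2:ℝ)^j := h144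
        _ ≤ (1/2:ℝ)^T * (1/2:ℝ)^j := by
            apply mul_le_mul_of_nonneg_right hhalf (by positivity)
    · rw [if_neg hj, mul_zero]
      positivity
  calc ∑ j ∈ Finset.range (n + 1), (n.choose j : ℝ) *
          (if T < (j : ℝ) then Real.exp (-(j : ℝ) * Real.log d) else 0)
      ≤ ∑ j ∈ Finset.range (n + 1), (1/2 : ℝ) ^ T * (1/2 : ℝ) ^ j := Finset.sum_le_sum h3
    _ = (1/2:ℝ)^T * ∑ j ∈ Finset.range (n + 1), (1/2 : ℝ) ^ j := by rw [Finset.mul_sum]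
    _ ≤ (1/2:ℝ)^T * 2 := by
        apply mul_le_mul_of_nonneg_left _ (by positivity)
        rw [geom_sum_eq (by norm_num : (1/2:ℝ) ≠ 1)]
        have : (0:ℝ) ≤ (1/2:ℝ)^(n+1) := by positivity
        rw [div_le_iff_of_neg (by norm_num : (1/2:ℝ) - 1 < 0)]
        linarith
    _ = 2 * (1/2:ℝ)^T := by ring

/-- key per-`n` bound -/
lemma key_bound (n : ℕ) (d : ℝ) (hd : 11 ≤ Real.log d) (hd0 : 0 < d)
    (hn1 : 1 ≤ n) (hdn : d ≤ n) :
    edgeMeasure n d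
      {A | ∀ S : Set (Vtx n), IsIndepSet n A S →
        ((leftPart S).ncard : ℝ) * ((rightPart S).ncard : ℝ) ≤
          (((leftPart S).ncard : ℝ) + ((rightPart S).ncard : ℝ)) *
            (n * (Real.log d / d))}ᶜ
    ≤ ENNReal.ofReal (2 * (1/2 : ℝ) ^ ((n : ℝ) * (Real.log d / d))) *
      ENNReal.ofReal (2 * (1/2 : ℝ) ^ ((n : ℝ) * (Real.log d / d))) := by
  classical
  have hld : (0:ℝ) < Real.log d := by linarith
  have hnR : (0:ℝ) < n := by exact_mod_cast hn1
  set T : ℝ := (n : ℝ) * (Real.log d / d) with hTdef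
  have hT0 : 0 < T := by
    apply mul_pos hnR (div_pos hld hd0)
  set p : ℝ := d / n with hpdef
  have hp0 : 0 ≤ p := div_nonneg hd0.le hnR.le
  have hp1 : p ≤ 1 := by rw [hpdef, div_le_one hnR]; exact hdn
  -- the no-edge events
  set N : Finset (Fin n) → Finset (Fin n) → Set (Fin (n*n) → Bool) :=
    fun K M => {A | ∀ i ∈ K, ∀ j ∈ M, A (finProdFinEquiv (i, j)) = false} with hNdef
  set badPairs : Finset (Finset (Fin n) × Finset (Fin n)) :=
    Finset.univ.filter (fun q => ((q.1.card : ℝ) + (q.2.card : ℝ)) * T <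
      (q.1.card : ℝ) * (q.2.card : ℝ)) with hbadDef
  -- Step 1 : inclusion
  have hsub : {A : Fin (n*n) → Bool | ∀ S : Set (Vtx n), IsIndepSet n A S →
        ((leftPart S).ncard : ℝ) * ((rightPart S).ncard : ℝ) ≤
          (((leftPart S).ncard : ℝ) + ((rightPart S).ncard : ℝ)) * ((n : ℝ) * (Real.log d / d))}ᶜ
      ⊆ ⋃ q ∈ badPairs, N q.1 q.2 := by
    intro A hA
    simp only [Set.mem_compl_iff, Set.mem_setOf_eq] at hA
    push_neg at hA
    obtain ⟨S, hS, hlt⟩ := hA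
    set K : Finset (Fin n) := Finset.univ.filter (fun i => Sum.inl i ∈ S) with hKdef
    set M : Finset (Fin n) := Finset.univ.filter (fun j => Sum.inr j ∈ S) with hMdef
    have hKcard : (leftPart S).ncard = K.card := by
      have h1 : leftPart S = Sum.inl '' (↑K : Set (Fin n)) := by
        ext x
        constructor
        · rintro ⟨hxS, i, rfl⟩
          exact ⟨i, by simp [hKdef, hxS], rfl⟩
        · rintro ⟨i, hi, rfl⟩
          rw [Finset.mem_coe, hKdef, Finset.mem_filter] at hi
          exact ⟨hi.2, i, rfl⟩
      rw [h1, Set.ncard_image_of_injective _ Sum.inl_injective, Set.ncard_coe_finset]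
    have hMcard : (rightPart S).ncard = M.card := by
      have h1 : rightPart S = Sum.inr '' (↑M : Set (Fin n)) := by
        ext x
        constructor
        · rintro ⟨hxS, j, rfl⟩
          exact ⟨j, by simp [hMdef, hxS], rfl⟩
        · rintro ⟨j, hj, rfl⟩
          rw [Finset.mem_coe, hMdef, Finset.mem_filter] at hj
          exact ⟨hj.2, j, rfl⟩
      rw [h1, Set.ncard_image_of_injective _ Sum.inr_injective, Set.ncard_coe_finset]
    refine Set.mem_biUnion (?_ : (K, M) ∈ badPairs) ?_
    · rw [hbadDef, Finset.mem_filter]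
      refine ⟨Finset.mem_univ _, ?_⟩
      rw [hKcard, hMcard] at hlt
      exact hlt
    · intro i hi j hj
      have hiS : Sum.inl i ∈ S := by
        rw [hKdef] at hi; exact (Finset.mem_filter.mp hi).2
      have hjS : Sum.inr j ∈ S := by
        rw [hMdef] at hj; exact (Finset.mem_filter.mp hj).2
      have := hS (Sum.inl i) hiS (Sum.inr j) hjS
      exact Bool.eq_false_iff.mpr (fun h => this h)
  -- Step 2 : union bound
  have hub : edgeMeasure n d ({A : Fin (n*n) → Bool | ∀ S : Set (Vtx n), IsIndepSet n A S →
        ((leftPart S).ncard : ℝ) * ((rightPart S).ncard : ℝ) ≤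
          (((leftPart S).ncard : ℝ) + ((rightPart S).ncard : ℝ)) * ((n : ℝ) * (Real.log d / d))}ᶜ)
      ≤ ∑ q ∈ badPairs, edgeMeasure n d (N q.1 q.2) :=
    (measure_mono hsub).trans (measure_biUnion_finset_le _ _)
  -- Step 3 : probability of each no-edge event
  have hprob : ∀ K M : Finset (Fin n),
      edgeMeasure n d (N K M) = ENNReal.ofReal (1 - p) ^ (K.card * M.card) := by
    intro K M
    have hE : N K M = {A : Fin (n*n) → Bool |
        ∀ x ∈ (K ×ˢ M).image (fun ij : Fin n × Fin n => finProdFinEquiv ij), A x = false} := by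
      ext A
      constructor
      · intro h x hx
        obtain ⟨⟨i, j⟩, hij, rfl⟩ := Finset.mem_image.mp hx
        obtain ⟨hi, hj⟩ := Finset.mem_product.mp hij
        exact h i hi j hj
      · intro h i hi j hj
        exact h _ (Finset.mem_image_of_mem _ (Finset.mem_product.mpr ⟨hi, hj⟩))
    rw [hE, edge_cyl n d hp0 hp1,
      Finset.card_image_of_injective _ (Equiv.injective _), Finset.card_product]
  -- Step 4 : per bad pair bound
  set g : Finset (Fin n) → ENNReal :=
    fun K => ENNReal.ofReal (Real.exp (-(K.card : ℝ) * Real.log d)) with hgdef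
  have hstep4 : ∀ q ∈ badPairs, edgeMeasure n d (N q.1 q.2) ≤ g q.1 * g q.2 := by
    rintro ⟨K, M⟩ hq
    rw [hbadDef, Finset.mem_filter] at hq
    have hbad := hq.2
    simp only at hbad
    set a : ℕ := K.card
    set b : ℕ := M.card
    have ha0 : (0:ℝ) ≤ a := Nat.cast_nonneg a
    have hb0 : (0:ℝ) ≤ b := Nat.cast_nonneg b
    have hexp : (1 - p) ^ (a * b) ≤ Real.exp (-((a:ℝ) + b) * Real.log d) := by
      have h1 : (1 - p) ^ (a * b) ≤ Real.exp (-p) ^ (a * b) := by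
        apply pow_le_pow_left₀ (by linarith) (by linarith [Real.add_one_le_exp (-p)])
      have h2 : Real.exp (-p) ^ (a * b) = Real.exp (-p * ((a:ℝ) * b)) := by
        rw [show -p * ((a:ℝ) * b) = ((a*b : ℕ) : ℝ) * (-p) by push_cast; ring,
          Real.exp_nat_mul]
      have h3 : -p * ((a:ℝ) * b) ≤ -((a:ℝ) + b) * Real.log d := by
        have : ((a:ℝ) + b) * Real.log d ≤ p * ((a:ℝ) * b) := by
          have hmul := mul_le_mul_of_nonneg_left hbad.le (le_of_lt (div_pos hd0 hnR))
          calc ((a:ℝ) + b) * Real.log d = (d / n) * (((a:ℝ) + b) * T) := by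
                rw [hTdef]; field_simp
            _ ≤ (d / n) * ((a:ℝ) * b) := hmul
            _ = p * ((a:ℝ) * b) := by rw [hpdef]
        linarith
      calc (1 - p) ^ (a * b) ≤ Real.exp (-p) ^ (a * b) := h1
        _ = Real.exp (-p * ((a:ℝ) * b)) := h2
        _ ≤ Real.exp (-((a:ℝ) + b) * Real.log d) := Real.exp_le_exp.mpr h3
    rw [hprob K M]
    rw [hgdef]
    simp only
    rw [← ENNReal.ofReal_mul (by positivity), ← Real.exp_add,
      ← ENNReal.ofReal_pow (by linarith)]
    apply ENNReal.ofReal_le_ofReal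
    calc (1 - p) ^ (a * b) ≤ Real.exp (-((a:ℝ) + b) * Real.log d) := hexp
      _ = Real.exp (-(a:ℝ) * Real.log d + -(b:ℝ) * Real.log d) := by congr 1; ring
  -- Step 5 : widen the index set
  have hwiden : badPairs ⊆ Finset.univ.filter
      (fun q : Finset (Fin n) × Finset (Fin n) => T < (q.1.card : ℝ) ∧ T < (q.2.card : ℝ)) := by
    rintro ⟨K, M⟩ hq
    rw [hbadDef, Finset.mem_filter] at hq
    have hbad := hq.2
    simp only at hbad
    rw [Finset.mem_filter]
    refine ⟨Finset.mem_univ _, ?_, ?_⟩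
    · by_contra h
      push_neg at h
      nlinarith [(Nat.cast_nonneg K.card : (0:ℝ) ≤ K.card), (Nat.cast_nonneg M.card : (0:ℝ) ≤ M.card)]
    · by_contra h
      push_neg at h
      nlinarith [(Nat.cast_nonneg K.card : (0:ℝ) ≤ K.card), (Nat.cast_nonneg M.card : (0:ℝ) ≤ M.card)]
  -- Step 6 : sum factorization and final bound
  have hfact : ∑ q ∈ Finset.univ.filter
        (fun q : Finset (Fin n) × Finset (Fin n) => T < (q.1.card : ℝ) ∧ T < (q.2.card : ℝ)),
        g q.1 * g q.2
      = (∑ K ∈ Finset.univ.filter (fun K : Finset (Fin n) => T < (K.card : ℝ)), g K) *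
        (∑ M ∈ Finset.univ.filter (fun M : Finset (Fin n) => T < (M.card : ℝ)), g M) := by
    rw [Finset.sum_mul_sum, ← Finset.sum_product', ← Finset.filter_product,
      Finset.univ_product_univ]
  have hsingle : (∑ K ∈ Finset.univ.filter (fun K : Finset (Fin n) => T < (K.card : ℝ)), g K)
      ≤ ENNReal.ofReal (2 * (1/2 : ℝ) ^ ((n : ℝ) * (Real.log d / d))) := by
    rw [hgdef]
    rw [← ENNReal.ofReal_sum_of_nonneg (fun i _ => (Real.exp_pos _).le)]
    exact ENNReal.ofReal_le_ofReal (sum_filter_le n d hd hd0)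
  calc edgeMeasure n d _ ≤ ∑ q ∈ badPairs, edgeMeasure n d (N q.1 q.2) := hub
    _ ≤ ∑ q ∈ badPairs, g q.1 * g q.2 := Finset.sum_le_sum hstep4
    _ ≤ ∑ q ∈ Finset.univ.filter
        (fun q : Finset (Fin n) × Finset (Fin n) => T < (q.1.card : ℝ) ∧ T < (q.2.card : ℝ)),
        g q.1 * g q.2 := Finset.sum_le_sum_of_subset hwiden
    _ = _ := hfact
    _ ≤ ENNReal.ofReal (2 * (1/2 : ℝ) ^ ((n : ℝ) * (Real.log d / d))) *
        ENNReal.ofReal (2 * (1/2 : ℝ) ^ ((n : ℝ) * (Real.log d / d))) :=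
      mul_le_mul' hsingle hsingle

/-- There exists `d₀ > 0` such that for every real `d ≥ d₀`, the probability that
every independent set `I` of `G^bip_{n,d}` satisfies
`(|I∩L| + |I∩R|) · n·(log d)/d ≥ |I∩L| · |I∩R|` tends to `1` as `n → ∞`. -/
theorem stmt2 :
    ∃ d₀ : ℝ, 0 < d₀ ∧ ∀ d : ℝ, d₀ ≤ d →
      Filter.Tendsto
        (fun n : ℕ => edgeMeasure n d
          {A | ∀ S : Set (Vtx n), IsIndepSet n A S →
            ((leftPart S).ncard : ℝ) * ((rightPart S).ncard : ℝ) ≤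
              (((leftPart S).ncard : ℝ) + ((rightPart S).ncard : ℝ)) *
                (n * (Real.log d / d))})
        Filter.atTop (nhds 1) := by
  refine ⟨Real.exp 11, Real.exp_pos 11, fun d hd => ?_⟩
  have hd0 : 0 < d := lt_of_lt_of_le (Real.exp_pos 11) hd
  have hld : 11 ≤ Real.log d := by
    rw [show (11:ℝ) = Real.log (Real.exp 11) by rw [Real.log_exp]]
    exact (Real.log_le_log_iff (Real.exp_pos 11) hd0).mpr hd
  have hld0 : (0:ℝ) < Real.log d := by linarith
  set G : (n : ℕ) → Set (Fin (n*n) → Bool) := fun n =>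
    {A | ∀ S : Set (Vtx n), IsIndepSet n A S →
      ((leftPart S).ncard : ℝ) * ((rightPart S).ncard : ℝ) ≤
        (((leftPart S).ncard : ℝ) + ((rightPart S).ncard : ℝ)) *
          (n * (Real.log d / d))} with hGdef
  set β : ℕ → ℝ := fun n => 2 * (1/2 : ℝ) ^ ((n : ℝ) * (Real.log d / d)) with hβdef
  have hβ0 : ∀ n, 0 ≤ β n := by
    intro n
    have : (0:ℝ) < (1/2 : ℝ) ^ ((n : ℝ) * (Real.log d / d)) :=
      Real.rpow_pos_of_pos (by norm_num) _
    simp only [hβdef]; linarith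
  -- β tends to 0
  have hβ : Tendsto β atTop (nhds 0) := by
    have h1 : Tendsto (fun n : ℕ => (n : ℝ) * (Real.log d / d)) atTop atTop :=
      tendsto_natCast_atTop_atTop.atTop_mul_const (div_pos hld0 hd0)
    have h2 : Tendsto (fun n : ℕ => (n : ℝ) * (Real.log d / d) * Real.log (1/2)) atTop atBot :=
      h1.atTop_mul_const_of_neg (by
        rw [show (1/2 : ℝ) = 2⁻¹ by norm_num, Real.log_inv]
        have := Real.log_pos (by norm_num : (1:ℝ) < 2)
        linarith)
    have h3 : Tendsto (fun n : ℕ => Real.exp ((n : ℝ) * (Real.log d / d) * Real.log (1/2)))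
        atTop (nhds 0) := Real.tendsto_exp_atBot.comp h2
    have h4 : (fun n : ℕ => (1/2 : ℝ) ^ ((n : ℝ) * (Real.log d / d)))
        = fun n : ℕ => Real.exp ((n : ℝ) * (Real.log d / d) * Real.log (1/2)) := by
      funext n
      rw [Real.rpow_def_of_pos (by norm_num), mul_comm (Real.log (1/2))]
    have h5 := h3.const_mul (2:ℝ)
    rw [mul_zero] at h5
    rw [hβdef]
    refine h5.congr fun n => ?_
    congr 1
    rw [Real.rpow_def_of_pos (by norm_num), mul_comm (Real.log (1/2))]
  -- upper bound tends to 0 in ENNReal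
  have hu : Tendsto (fun n => ENNReal.ofReal (β n) * ENNReal.ofReal (β n)) atTop (nhds 0) := by
    have h1 : Tendsto (fun n => β n * β n) atTop (nhds 0) := by
      have := hβ.mul hβ
      simpa using this
    have h2 : Tendsto (fun n => ENNReal.ofReal (β n * β n)) atTop (nhds 0) := by
      have := ENNReal.tendsto_ofReal h1
      simpa using this
    refine h2.congr fun n => ?_
    rw [ENNReal.ofReal_mul (hβ0 n)]
  -- eventual bound
  have hbound : ∀ᶠ n : ℕ in atTop,
      edgeMeasure n d ((G n)ᶜ) ≤ ENNReal.ofReal (β n) * ENNReal.ofReal (β n) := by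
    filter_upwards [eventually_ge_atTop (max 1 ⌈d⌉₊)] with n hn
    have hn1 : 1 ≤ n := le_trans (le_max_left _ _) hn
    have hdn : d ≤ n := by
      calc d ≤ (⌈d⌉₊ : ℝ) := Nat.le_ceil d
        _ ≤ n := by exact_mod_cast le_trans (le_max_right _ _) hn
    exact key_bound n d hld hd0 hn1 hdn
  -- complement tends to 0
  have hcompl : Tendsto (fun n => edgeMeasure n d ((G n)ᶜ)) atTop (nhds 0) :=
    tendsto_of_tendsto_of_tendsto_of_le_of_le' tendsto_const_nhds hu
      (Eventually.of_forall fun n => zero_le) hbound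
  -- eventually a probability measure
  have hev : ∀ᶠ n : ℕ in atTop,
      edgeMeasure n d (G n) = 1 - edgeMeasure n d ((G n)ᶜ) := by
    filter_upwards [eventually_ge_atTop (max 1 ⌈d⌉₊)] with n hn
    have hn1 : 1 ≤ n := le_trans (le_max_left _ _) hn
    have hnR : (0:ℝ) < n := by exact_mod_cast hn1
    have hdn : d ≤ n := by
      calc d ≤ (⌈d⌉₊ : ℝ) := Nat.le_ceil d
        _ ≤ n := by exact_mod_cast le_trans (le_max_right _ _) hn
    have hp0 : 0 ≤ d / n := div_nonneg hd0.le hnR.le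
    have hp1 : d / n ≤ 1 := by rw [div_le_one hnR]; exact hdn
    haveI : IsProbabilityMeasure (edgeMeasure n d) := by
      constructor
      have huniv : (Set.univ : Set (Fin (n*n) → Bool))
          = Set.pi Set.univ (fun _ => (Set.univ : Set Bool)) := by
        rw [Set.pi_univ]
      rw [edgeMeasure, huniv, Measure.pi_pi, Finset.prod_const, coin_univ _ hp0 hp1, one_pow]
    conv_lhs => rw [← compl_compl (G n)]
    rw [prob_compl_eq_one_sub (meas_all _)]
  have h1 : Tendsto (fun n => 1 - edgeMeasure n d ((G n)ᶜ)) atTop (nhds 1) := by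
    have := ENNReal.Tendsto.sub
      (tendsto_const_nhds : Tendsto (fun _ : ℕ => (1:ENNReal)) atTop (nhds 1))
      hcompl (Or.inl ENNReal.one_ne_top)
    simpa using this
  exact h1.congr' (hev.mono fun n h => h.symm)
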